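/- There exists a universal constant $C>0$ with the following property. Let $\bar f:[0,1]\to[0,\infty)$ be continuously differentiable and concave with $\bar f(1)=0$, let $f:[0,1]\to\mathbb R$ be continuous with $|f|\le\bar f$ on $[0,1]$, let $n\ge 1$ be an integer, and define $f_n(r) = -r^{-4n}\int_0^r s^{8n-1}\big(\int_s^1 \tau^{1-4n} f(\tau)\,d\tau\big)ds$ for $r\in(0,1)$. Then for all $r\in(0,1)$: $|f_n'(r)| \le \frac{C\,r}{n}\,M(r)$, where $M(r)=\sup_{\tau\in[0,r]}\bar f(\tau)+\sup_{\tau\in[0,r]}\tau\bar f'(\tau)$. -/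

import Mathlib

open Real MeasureTheory Set intervalIntegral

-- helper: antitone base for nonpositive integer exponent
lemma zpow_anti_base {s r : ℝ} (hs : 0 < s) (hsr : s ≤ r) {k : ℤ} (hk : k ≤ 0) :
    r ^ k ≤ s ^ k := by
  have hr : 0 < r := hs.trans_le hsr
  have h1 : s ^ (-k) ≤ r ^ (-k) := by
    have hnk : 0 ≤ -k := by omega
    lift -k to ℕ using hnk with m hm
    rw [zpow_natCast, zpow_natCast]
    exact pow_le_pow_left₀ hs.le hsr m
  calc r ^ k = (r ^ (-k))⁻¹ := by rw [← zpow_neg, neg_neg]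
    _ ≤ (s ^ (-k))⁻¹ := inv_anti₀ (zpow_pos hs _) h1
    _ = s ^ k := by rw [← zpow_neg, neg_neg]

set_option maxHeartbeats 2000000 in
theorem stmt8 :
    ∃ C > (0:ℝ), ∀ (fbar : ℝ → ℝ),
      (∀ r ∈ Set.Icc (0:ℝ) 1, 0 ≤ fbar r) →
      (∀ x ∈ Set.Icc (0:ℝ) 1, DifferentiableAt ℝ fbar x) →
      ContinuousOn (deriv fbar) (Set.Icc 0 1) →
      ConcaveOn ℝ (Set.Icc 0 1) fbar →
      fbar 1 = 0 →
      ∀ (f : ℝ → ℝ), ContinuousOn f (Set.Icc 0 1) →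
      (∀ r ∈ Set.Icc (0:ℝ) 1, |f r| ≤ fbar r) →
      ∀ (n : ℕ), 1 ≤ n →
      ∀ (fn : ℝ → ℝ),
      (∀ r ∈ Set.Ioo (0:ℝ) 1,
        fn r = -(r ^ (-(4 * (n:ℤ)))) *
          ∫ s in (0:ℝ)..r, s ^ (8 * (n:ℤ) - 1) * ∫ τ in s..(1:ℝ), τ ^ (1 - 4 * (n:ℤ)) * f τ) →
      ∀ r ∈ Set.Ioo (0:ℝ) 1,
        |deriv fn r| ≤ C * r / (n:ℝ) *
            (sSup (fbar '' Set.Icc 0 r) +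
              sSup ((fun τ => τ * deriv fbar τ) '' Set.Icc 0 r)) := by
  refine ⟨2, by norm_num, ?_⟩
  intro fbar hfb0 hfbd hfbdc hfbcc hfb1 f hfc hffb n hn fn hfn r hr
  obtain ⟨hr0, hr1⟩ := hr
  have hn1 : (1:ℝ) ≤ (n:ℝ) := by exact_mod_cast hn
  have hn0 : (0:ℝ) < (n:ℝ) := by linarith
  -- notation
  set h : ℝ → ℝ := fun τ => τ ^ (1 - 4 * (n:ℤ)) * f τ with hh
  set G : ℝ → ℝ := fun s => ∫ τ in s..(1:ℝ), h τ with hG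
  set φ : ℝ → ℝ := fun s => s ^ (8 * (n:ℤ) - 1) * G s with hφ
  set H : ℝ → ℝ := fun x => ∫ s in (0:ℝ)..x, φ s with hH
  set M1 := sSup (fbar '' Set.Icc 0 r) with hM1def
  set M2 := sSup ((fun τ => τ * deriv fbar τ) '' Set.Icc 0 r) with hM2def
  set M := M1 + M2 with hMdef
  -- continuity of fbar
  have hfbcont : ContinuousOn fbar (Set.Icc 0 1) :=
    fun x hx => ((hfbd x hx).continuousAt).continuousWithinAt
  have hsub : Set.Icc (0:ℝ) r ⊆ Set.Icc 0 1 := Set.Icc_subset_Icc le_rfl hr1.le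
  -- M1 bounds
  have hM1 : ∀ τ ∈ Set.Icc (0:ℝ) r, fbar τ ≤ M1 := by
    intro τ hτ
    exact le_csSup ((isCompact_Icc.image_of_continuousOn (hfbcont.mono hsub)).bddAbove)
      (Set.mem_image_of_mem _ hτ)
  have hM10 : 0 ≤ M1 := le_trans (hfb0 0 (by constructor <;> norm_num))
      (hM1 0 ⟨le_rfl, hr0.le⟩)
  have hM2bdd : BddAbove ((fun τ => τ * deriv fbar τ) '' Set.Icc 0 r) :=
    (isCompact_Icc.image_of_continuousOn
      ((continuousOn_id.mul (hfbdc.mono hsub)))).bddAbove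
  have hM2 : ∀ τ ∈ Set.Icc (0:ℝ) r, τ * deriv fbar τ ≤ M2 := by
    intro τ hτ
    exact le_csSup hM2bdd (Set.mem_image_of_mem _ hτ)
  have hM20 : 0 ≤ M2 := by
    have := hM2 0 ⟨le_rfl, hr0.le⟩
    simpa using this
  have hM0 : 0 ≤ M := by simp [hMdef]; linarith
  -- tangent-line bound on [r,1]
  have htail : ∀ τ ∈ Set.Icc r 1, fbar τ ≤ M1 + M2 * τ / r := by
    intro τ hτ
    obtain ⟨hτr, hτ1⟩ := hτ
    have hτ0 : 0 < τ := hr0.trans_le hτr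
    have hrD : r * deriv fbar r ≤ M2 := hM2 r ⟨hr0.le, le_rfl⟩
    have hM1r : fbar r ≤ M1 := hM1 r ⟨hr0.le, le_rfl⟩
    have hfb : fbar τ ≤ fbar r + deriv fbar r * (τ - r) := by
      rcases eq_or_lt_of_le hτr with he | hlt
      · rw [← he]; simp
      · have hs := hfbcc.slope_le_deriv ⟨hr0.le, hr1.le⟩ ⟨hτ0.le, hτ1⟩ hlt
          (hfbd r ⟨hr0.le, hr1.le⟩)
        rw [slope_def_field, div_le_iff₀ (by linarith)] at hs
        linarith
    rw [show M1 + M2 * τ / r = (r * M1 + M2 * τ) / r by field_simp,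
      le_div_iff₀ hr0]
    nlinarith [hfb, hrD, hM20, hτr, hM1r, hr0, hτ0]
  -- interval integrability of h on subintervals of (0,1]
  have hInt : ∀ a b : ℝ, 0 < a → a ≤ b → b ≤ 1 → IntervalIntegrable h volume a b := by
    intro a b ha hab hb1
    apply ContinuousOn.intervalIntegrable
    rw [Set.uIcc_of_le hab]
    apply ContinuousOn.mul
    · exact ContinuousOn.zpow₀ continuousOn_id _
        (fun x hx => Or.inl (ne_of_gt (lt_of_lt_of_le ha hx.1)))
    · exact hfc.mono (Set.Icc_subset_Icc (by linarith) hb1)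
  -- continuity of h on Ioo 0 1
  have hhca : ∀ x ∈ Set.Ioo (0:ℝ) 1, ContinuousAt h x := by
    intro x hx
    exact (continuousAt_zpow₀ x _ (Or.inl (ne_of_gt hx.1))).mul
      ((hfc x ⟨hx.1.le, hx.2.le⟩).continuousAt (Icc_mem_nhds hx.1 hx.2))
  -- continuity of G at interior points
  have hGcont : ∀ x ∈ Set.Ioo (0:ℝ) 1, ContinuousAt G x := by
    intro x hx
    obtain ⟨hx0, hx1⟩ := hx
    have ha0 : 0 < x / 2 := by linarith
    have hax : x / 2 < x := by linarith
    have hev : (fun s => (∫ τ in (x/2)..(1:ℝ), h τ) - ∫ τ in (x/2)..s, h τ) =ᶠ[nhds x] G := by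
      filter_upwards [Ioo_mem_nhds hax hx1] with s hs
      have hadd := intervalIntegral.integral_add_adjacent_intervals
        (hInt (x/2) s ha0 hs.1.le hs.2.le) (hInt s 1 (ha0.trans hs.1) hs.2.le le_rfl)
      simp only [hG]
      linarith [hadd]
    refine ContinuousAt.congr ?_ hev
    refine ContinuousAt.sub continuousAt_const ?_
    exact (intervalIntegral.integral_hasDerivAt_right (hInt (x/2) x ha0 hax.le hx1.le)
      (ContinuousOn.stronglyMeasurableAtFilter isOpen_Ioo
        (fun y hy => (hhca y hy).continuousWithinAt) x ⟨hx0, hx1⟩) (hhca x ⟨hx0, hx1⟩)).continuousAt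
  -- pointwise bound on G
  have hGb : ∀ s : ℝ, 0 < s → s ≤ r → |G s| ≤ M / n * s ^ (2 - 4 * (n:ℤ)) := by
    intro s hs0 hsr
    have hs1 : s ≤ 1 := hsr.trans hr1.le
    set ψ1 : ℝ → ℝ := fun t => M1 * t ^ (1 - 4 * (n:ℤ)) with hψ1
    set ψ2 : ℝ → ℝ := fun t => M2 / r * t ^ (2 - 4 * (n:ℤ)) with hψ2
    have hzpowc : ∀ k : ℤ, ContinuousOn (fun t : ℝ => t ^ k) (Set.Icc s 1) :=
      fun k => ContinuousOn.zpow₀ continuousOn_id _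
        (fun x hx => Or.inl (ne_of_gt (lt_of_lt_of_le hs0 hx.1)))
    have hψ1i : IntervalIntegrable ψ1 volume s 1 := by
      apply ContinuousOn.intervalIntegrable
      rw [Set.uIcc_of_le hs1]
      exact continuousOn_const.mul (hzpowc _)
    have hψ2i : IntervalIntegrable ψ2 volume s 1 := by
      apply ContinuousOn.intervalIntegrable
      rw [Set.uIcc_of_le hs1]
      exact continuousOn_const.mul (hzpowc _)
    have hbd : ∀ᵐ t ∂volume.restrict (Set.uIoc s 1), ‖h t‖ ≤ ψ1 t + ψ2 t := by
      filter_upwards [ae_restrict_mem measurableSet_uIoc] with t ht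
      rw [Set.uIoc_of_le hs1] at ht
      have ht0 : 0 < t := hs0.trans ht.1
      have hfbt : fbar t ≤ M1 + M2 * t / r := by
        rcases le_or_gt t r with hc | hc
        · have h1 := hM1 t ⟨ht0.le, hc⟩
          have h2 : 0 ≤ M2 * t / r := div_nonneg (mul_nonneg hM20 ht0.le) hr0.le
          linarith
        · exact htail t ⟨hc.le, ht.2⟩
      have hzp : (0:ℝ) < t ^ (1 - 4 * (n:ℤ)) := zpow_pos ht0 _
      calc ‖h t‖ = t ^ (1 - 4 * (n:ℤ)) * |f t| := by
            rw [Real.norm_eq_abs, hh, abs_mul, abs_of_pos hzp]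
        _ ≤ t ^ (1 - 4 * (n:ℤ)) * (M1 + M2 * t / r) := by
            apply mul_le_mul_of_nonneg_left _ hzp.le
            exact le_trans (hffb t ⟨ht0.le, ht.2⟩) hfbt
        _ = ψ1 t + ψ2 t := by
            simp only [hψ1, hψ2]
            rw [show (2 - 4 * (n:ℤ)) = (1 - 4 * n) + 1 by ring, zpow_add_one₀ ht0.ne']
            field_simp
    have key := intervalIntegral.norm_integral_le_of_norm_le hs1
      (by rw [← Set.uIoc_of_le hs1]; exact (ae_restrict_iff' measurableSet_uIoc).1 hbd) (hψ1i.add hψ2i)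
    have hne1 : (1 - 4 * (n:ℤ)) ≠ -1 := by omega
    have hne2 : (2 - 4 * (n:ℤ)) ≠ -1 := by omega
    have h0n : (0:ℝ) ∉ Set.uIcc s 1 := by
      rw [Set.uIcc_of_le hs1]
      exact fun hc => absurd hc.1 (not_le.mpr hs0)
    set A := s ^ (2 - 4 * (n:ℤ)) with hA
    set A' := s ^ (3 - 4 * (n:ℤ)) with hA'
    have hint : (∫ t in s..(1:ℝ), (ψ1 t + ψ2 t)) =
        M1 * ((1 - A) / ((1 - 4 * (n:ℝ)) + 1)) + M2 / r * ((1 - A') / ((2 - 4 * (n:ℝ)) + 1)) := by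
      rw [intervalIntegral.integral_add hψ1i hψ2i]
      simp only [hψ1, hψ2]
      rw [intervalIntegral.integral_const_mul, intervalIntegral.integral_const_mul,
        integral_zpow (Or.inr ⟨hne1, h0n⟩), integral_zpow (Or.inr ⟨hne2, h0n⟩)]
      rw [show (1 - 4 * (n:ℤ)) + 1 = 2 - 4 * (n:ℤ) by ring,
        show (2 - 4 * (n:ℤ)) + 1 = 3 - 4 * (n:ℤ) by ring]
      push_cast
      rw [one_zpow, one_zpow]
    -- basic facts
    have hA0 : 0 < A := zpow_pos hs0 _
    have hA1 : 1 ≤ A := one_le_zpow_of_nonpos₀ hs0 hs1 (by omega)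
    have hA'1 : 1 ≤ A' := one_le_zpow_of_nonpos₀ hs0 hs1 (by omega)
    have hA'A : A' = A * s := by
      rw [hA', hA, show (3 - 4 * (n:ℤ)) = (2 - 4 * n) + 1 by ring, zpow_add_one₀ hs0.ne']
    have hd1 : (1:ℝ) - 4 * (n:ℝ) + 1 < 0 := by linarith
    have hd2 : (2:ℝ) - 4 * (n:ℝ) + 1 < 0 := by linarith
    have e1 : ((1:ℝ) - A) / ((1 - 4 * (n:ℝ)) + 1) = (A - 1) / (4 * (n:ℝ) - 2) := by
      rw [div_eq_div_iff hd1.ne (by linarith : (4:ℝ) * (n:ℝ) - 2 ≠ 0)]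
      ring
    have e2 : ((1:ℝ) - A') / ((2 - 4 * (n:ℝ)) + 1) = (A' - 1) / (4 * (n:ℝ) - 3) := by
      rw [div_eq_div_iff hd2.ne (by linarith : (4:ℝ) * (n:ℝ) - 3 ≠ 0)]
      ring
    have b1 : M1 * ((A - 1) / (4 * (n:ℝ) - 2)) ≤ M1 * A / n := by
      have : (A - 1) / (4 * (n:ℝ) - 2) ≤ A / n := by
        rw [div_le_div_iff₀ (by linarith) hn0]
        nlinarith
      calc M1 * ((A - 1) / (4 * (n:ℝ) - 2)) ≤ M1 * (A / n) :=
            mul_le_mul_of_nonneg_left this hM10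
        _ = M1 * A / n := by ring
    have b2 : M2 / r * ((A' - 1) / (4 * (n:ℝ) - 3)) ≤ M2 * A / n := by
      have h1 : (A' - 1) / (4 * (n:ℝ) - 3) ≤ A' / n := by
        rw [div_le_div_iff₀ (by linarith) hn0]
        nlinarith
      have h2 : M2 / r * ((A' - 1) / (4 * (n:ℝ) - 3)) ≤ M2 / r * (A' / n) :=
        mul_le_mul_of_nonneg_left h1 (div_nonneg hM20 hr0.le)
      have h3 : M2 / r * (A' / n) = M2 * A / n * (s / r) := by
        rw [hA'A]; field_simp
      have h4 : s / r ≤ 1 := (div_le_one hr0).2 hsr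
      have h5 : M2 * A / n * (s / r) ≤ M2 * A / n * 1 :=
        mul_le_mul_of_nonneg_left h4 (div_nonneg (mul_nonneg hM20 hA0.le) hn0.le)
      calc M2 / r * ((A' - 1) / (4 * (n:ℝ) - 3)) ≤ M2 / r * (A' / n) := h2
        _ = M2 * A / n * (s / r) := h3
        _ ≤ M2 * A / n * 1 := h5
        _ = M2 * A / n := by ring
    have hval0 : 0 ≤ M1 * ((A - 1) / (4 * (n:ℝ) - 2)) + M2 / r * ((A' - 1) / (4 * (n:ℝ) - 3)) := by
      have hq1 : 0 ≤ (A - 1) / (4 * (n:ℝ) - 2) := div_nonneg (by linarith) (by linarith)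
      have hq2 : 0 ≤ (A' - 1) / (4 * (n:ℝ) - 3) := div_nonneg (by linarith) (by linarith)
      exact add_nonneg (mul_nonneg hM10 hq1) (mul_nonneg (div_nonneg hM20 hr0.le) hq2)
    have key2 : |G s| ≤ M1 * ((A - 1) / (4 * (n:ℝ) - 2)) + M2 / r * ((A' - 1) / (4 * (n:ℝ) - 3)) := by
      have habs : |∫ (t : ℝ) in s..(1:ℝ), (ψ1 t + ψ2 t)| =
          M1 * ((A - 1) / (4 * (n:ℝ) - 2)) + M2 / r * ((A' - 1) / (4 * (n:ℝ) - 3)) := by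
        rw [hint, e1, e2]
        exact abs_of_nonneg hval0
      calc |G s| = ‖∫ (t : ℝ) in s..(1:ℝ), h t‖ := by rw [Real.norm_eq_abs]
        _ ≤ |∫ (t : ℝ) in s..(1:ℝ), (ψ1 t + ψ2 t)| := key.trans (le_abs_self _)
        _ = _ := habs
    calc |G s| ≤ M1 * A / n + M2 * A / n := by linarith
      _ = M / n * A := by rw [hMdef]; ring
  -- continuity of φ at interior points
  have hφca : ∀ x ∈ Set.Ioo (0:ℝ) 1, ContinuousAt φ x := by
    intro x hx
    exact ((continuousAt_zpow₀ x _ (Or.inl (ne_of_gt hx.1))).mul (hGcont x hx))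
  have hφco : ContinuousOn φ (Set.Ioo 0 1) := fun x hx => (hφca x hx).continuousWithinAt
  -- pointwise bound on φ
  have hφb : ∀ s : ℝ, 0 < s → s ≤ r → |φ s| ≤ M / n * s ^ (4 * n + 1) := by
    intro s hs0 hsr
    have hGs := hGb s hs0 hsr
    have hzp : (0:ℝ) < s ^ (8 * (n:ℤ) - 1) := zpow_pos hs0 _
    calc |φ s| = s ^ (8 * (n:ℤ) - 1) * |G s| := by
          rw [hφ, abs_mul, abs_of_pos hzp]
      _ ≤ s ^ (8 * (n:ℤ) - 1) * (M / n * s ^ (2 - 4 * (n:ℤ))) :=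
          mul_le_mul_of_nonneg_left hGs hzp.le
      _ = M / n * s ^ (4 * n + 1) := by
          rw [← zpow_natCast s (4 * n + 1),
            show ((4 * n + 1 : ℕ) : ℤ) = (8 * (n:ℤ) - 1) + (2 - 4 * (n:ℤ)) by push_cast; ring,
            zpow_add₀ hs0.ne']
          ring
  -- integrability of φ
  have hφint : IntervalIntegrable φ volume 0 r := by
    rw [intervalIntegrable_iff_integrableOn_Ioc_of_le hr0.le]
    have hss : Set.Ioc (0:ℝ) r ⊆ Set.Ioo (0:ℝ) 1 :=
      fun x hx => ⟨hx.1, lt_of_le_of_lt hx.2 hr1⟩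
    refine ⟨(hφco.mono hss).aestronglyMeasurable measurableSet_Ioc,
      HasFiniteIntegral.restrict_of_bounded (C := M / n) measure_Ioc_lt_top ?_⟩
    filter_upwards [ae_restrict_mem measurableSet_Ioc] with s hs
    have h1 := hφb s hs.1 hs.2
    have h2 : s ^ (4 * n + 1) ≤ 1 :=
      pow_le_one₀ hs.1.le (le_trans hs.2 hr1.le)
    have h3 : M / n * s ^ (4 * n + 1) ≤ M / n * 1 :=
      mul_le_mul_of_nonneg_left h2 (div_nonneg hM0 hn0.le)
    rw [Real.norm_eq_abs]
    linarith
  -- derivative of H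
  have hHd : HasDerivAt H (φ r) r := by
    refine intervalIntegral.integral_hasDerivAt_right hφint
      (hφco.stronglyMeasurableAtFilter isOpen_Ioo r ⟨hr0, hr1⟩) (hφca r ⟨hr0, hr1⟩)
  -- bound on H r
  have hHb : |H r| ≤ M / n * (r ^ (4 * n + 2) / (4 * n + 2)) := by
    have hbd : ∀ᵐ t ∂volume.restrict (Set.uIoc 0 r), ‖φ t‖ ≤ M / n * t ^ (4 * n + 1) := by
      filter_upwards [ae_restrict_mem measurableSet_uIoc] with t ht
      rw [Set.uIoc_of_le hr0.le] at ht
      rw [Real.norm_eq_abs]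
      exact hφb t ht.1 ht.2
    have hgint : IntervalIntegrable (fun t : ℝ => M / n * t ^ (4 * n + 1)) volume 0 r :=
      (Continuous.intervalIntegrable (continuous_const.mul (continuous_pow _)) 0 r)
    have key := intervalIntegral.norm_integral_le_of_norm_le hr0.le
      (by rw [← Set.uIoc_of_le hr0.le]; exact (ae_restrict_iff' measurableSet_uIoc).1 hbd) hgint
    have hint : (∫ t in (0:ℝ)..r, M / n * t ^ (4 * n + 1)) =
        M / n * (r ^ (4 * n + 2) / (4 * n + 2)) := by
      rw [intervalIntegral.integral_const_mul, integral_pow]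
      push_cast
      rw [zero_pow (by omega : 4 * n + 1 + 1 ≠ 0)]
      ring_nf
    have hval0 : (0:ℝ) ≤ M / n * (r ^ (4 * n + 2) / (4 * n + 2)) := by
      have : (0:ℝ) ≤ r ^ (4 * n + 2) := pow_nonneg hr0.le _
      have h42 : (0:ℝ) < 4 * (n:ℝ) + 2 := by linarith
      exact mul_nonneg (div_nonneg hM0 hn0.le) (div_nonneg this (by push_cast; linarith))
    calc |H r| = ‖∫ s in (0:ℝ)..r, φ s‖ := by rw [Real.norm_eq_abs]
      _ ≤ |∫ t in (0:ℝ)..r, M / n * t ^ (4 * n + 1)| := key.trans (le_abs_self _)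
      _ = M / n * (r ^ (4 * n + 2) / (4 * n + 2)) := by rw [hint, abs_of_nonneg hval0]
  -- derivative of fn
  have hzd := hasDerivAt_zpow (-(4 * (n:ℤ))) r (Or.inl hr0.ne')
  have hprod := hzd.neg.mul hHd
  have hev : fn =ᶠ[nhds r] fun x => -(x ^ (-(4 * (n:ℤ)))) * H x := by
    filter_upwards [Ioo_mem_nhds hr0 hr1] with x hx
    exact hfn x hx
  have hderiv : deriv fn r =
      -((((-(4 * (n:ℤ))) : ℤ) : ℝ) * r ^ (-(4 * (n:ℤ)) - 1)) * H r +
        -(r ^ (-(4 * (n:ℤ)))) * φ r := by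
    rw [hev.deriv_eq]
    exact hprod.deriv
  -- final estimate
  rw [hderiv]
  set P := r ^ (-(4 * (n:ℤ)) - 1) with hPdef
  set Q := r ^ (-(4 * (n:ℤ))) with hQdef
  have hP : (0:ℝ) < P := zpow_pos hr0 _
  have hQ : (0:ℝ) < Q := zpow_pos hr0 _
  have hR8 : (0:ℝ) < r ^ (8 * (n:ℤ) - 1) := zpow_pos hr0 _
  have hGr := hGb r hr0 le_rfl
  have hc1 : (-((((-(4 * (n:ℤ))) : ℤ) : ℝ) * P)) = 4 * (n:ℝ) * P := by push_cast; ring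
  have habs1 : |(-((((-(4 * (n:ℤ))) : ℤ) : ℝ) * P)) * H r| = 4 * (n:ℝ) * P * |H r| := by
    rw [abs_mul, hc1, abs_of_pos (mul_pos (by linarith : (0:ℝ) < 4 * (n:ℝ)) hP)]
  have hphir : |φ r| = r ^ (8 * (n:ℤ) - 1) * |G r| := by
    simp only [hφ]
    rw [abs_mul, abs_of_pos hR8]
  have habs2 : |(-Q) * φ r| = Q * (r ^ (8 * (n:ℤ) - 1) * |G r|) := by
    rw [abs_mul, abs_neg, abs_of_pos hQ, hphir]
  have t1 : 4 * (n:ℝ) * P * |H r| ≤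
      4 * (n:ℝ) * P * (M / n * (r ^ (4 * n + 2) / (4 * n + 2))) :=
    mul_le_mul_of_nonneg_left hHb (mul_pos (by linarith : (0:ℝ) < 4 * (n:ℝ)) hP).le
  have t2 : Q * (r ^ (8 * (n:ℤ) - 1) * |G r|) ≤
      Q * (r ^ (8 * (n:ℤ) - 1) * (M / n * r ^ (2 - 4 * (n:ℤ)))) :=
    mul_le_mul_of_nonneg_left (mul_le_mul_of_nonneg_left hGr hR8.le) hQ.le
  have hPr : P * r ^ (4 * n + 2) = r := by
    rw [hPdef, ← zpow_natCast r (4 * n + 2), ← zpow_add₀ hr0.ne',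
      show (-(4 * (n:ℤ)) - 1) + ((4 * n + 2 : ℕ) : ℤ) = 1 by push_cast; ring, zpow_one]
  have hQr : Q * (r ^ (8 * (n:ℤ) - 1) * r ^ (2 - 4 * (n:ℤ))) = r := by
    rw [hQdef, ← zpow_add₀ hr0.ne', ← zpow_add₀ hr0.ne',
      show (-(4 * (n:ℤ))) + (8 * (n:ℤ) - 1 + (2 - 4 * (n:ℤ))) = 1 by ring, zpow_one]
  have E1 : 4 * (n:ℝ) * P * (M / n * (r ^ (4 * n + 2) / (4 * n + 2))) =
      4 * (n:ℝ) / (4 * (n:ℝ) + 2) * (M / n * r) := by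
    rw [show 4 * (n:ℝ) * P * (M / n * (r ^ (4 * n + 2) / (4 * n + 2))) =
      4 * (n:ℝ) / (4 * (n:ℝ) + 2) * (M / n * (P * r ^ (4 * n + 2))) by ring, hPr]
  have E2 : Q * (r ^ (8 * (n:ℤ) - 1) * (M / n * r ^ (2 - 4 * (n:ℤ)))) = M / n * r := by
    rw [show Q * (r ^ (8 * (n:ℤ) - 1) * (M / n * r ^ (2 - 4 * (n:ℤ)))) =
      M / n * (Q * (r ^ (8 * (n:ℤ) - 1) * r ^ (2 - 4 * (n:ℤ)))) by ring, hQr]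
  have hMrn : 0 ≤ M / n * r := mul_nonneg (div_nonneg hM0 hn0.le) hr0.le
  have hfrac : 4 * (n:ℝ) / (4 * (n:ℝ) + 2) ≤ 1 := by
    rw [div_le_one (by linarith)]; linarith
  have total : |(-((((-(4 * (n:ℤ))) : ℤ) : ℝ) * P)) * H r + (-Q) * φ r| ≤ 2 * (M / n * r) := by
    calc |(-((((-(4 * (n:ℤ))) : ℤ) : ℝ) * P)) * H r + (-Q) * φ r|
        ≤ |(-((((-(4 * (n:ℤ))) : ℤ) : ℝ) * P)) * H r| + |(-Q) * φ r| := abs_add_le _ _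
      _ = 4 * (n:ℝ) * P * |H r| + Q * (r ^ (8 * (n:ℤ) - 1) * |G r|) := by rw [habs1, habs2]
      _ ≤ 4 * (n:ℝ) / (4 * (n:ℝ) + 2) * (M / n * r) + M / n * r := by
          rw [← E1, ← E2]; exact add_le_add t1 t2
      _ ≤ 1 * (M / n * r) + M / n * r :=
          add_le_add (mul_le_mul_of_nonneg_right hfrac hMrn) le_rfl
      _ = 2 * (M / n * r) := by ring
  have hgoal : 2 * (M / n * r) = 2 * r / (n:ℝ) * M := by ring
  rw [hgoal] at total
  exact total
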